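/- arXiv:0803.2423 — 4 statements merged into one kernel-verified Lean document; each statement's English description precedes it below -/
import Mathlib

section
/- Let (A,B) be a table algebra satisfying the standard character condition, and let D : A → Mat_n(ℂ) be a representation affording ζ such that D(b*) = D(b)ᵀ for all b ∈ B and every D(b), b ∈ B, is a (0,1)-matrix. Then: each D(b) has exactly |b| entries equal to 1 in every row and in every column; for distinct b, c ∈ B the matrices D(b) and D(c) never have an entry 1 in the same position; and Σ_{b∈B} D(b) = J, the all-ones n×n matrix. In particular the ℂ-span of {D(b) : b ∈ B} contains I and J and is closed under matrix multiplication, the entrywise (Hadamard) product, and transpose, i.e., it is a cellular algebra. -/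
open Matrix
open scoped BigOperators

/-- `(A, B)` is a (possibly noncommutative) C-algebra with degree map `deg` and
structure constants `lam` :
(I) `1 ∈ B`, `B` is a basis, and the structure constants are real;
(II) `star` is a conjugate-linear involutory anti-automorphism with `B* = B`
(encoded by the `StarRing`/`StarModule` instances and `star_mem`);
(III) `λ_{a b 1} = δ_{a, b*} |a|` with `|a| > 0`;
(IV) `deg` is a `ℂ`-algebra homomorphism with `deg b = |b|` and `deg (x*) = conj (deg x)`. -/
structure IsCAlgebra (A : Type*) [Ring A] [Algebra ℂ A] [StarRing A] [StarModule ℂ A]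
    (B : Finset A) (deg : A →ₐ[ℂ] ℂ) (lam : A → A → A → ℝ) : Prop where
  indep : LinearIndependent ℂ (fun x : ↥(B : Set A) => (x : A))
  span_top : Submodule.span ℂ (B : Set A) = ⊤
  one_mem : (1 : A) ∈ B
  star_mem : ∀ b ∈ B, star b ∈ B
  struct : ∀ a ∈ B, ∀ b ∈ B, a * b = ∑ c ∈ B, (lam a b c : ℂ) • c
  lam_one_eq : ∀ a ∈ B, (lam a (star a) 1 : ℂ) = deg a
  lam_one_ne : ∀ a ∈ B, ∀ b ∈ B, a ≠ star b → lam a b 1 = 0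
  deg_pos : ∀ a ∈ B, 0 < lam a (star a) 1
  deg_star : ∀ x : A, deg (star x) = (starRingEnd ℂ) (deg x)

/-- A table algebra is a C-algebra with nonnegative structure constants. -/
structure IsTableAlgebra (A : Type*) [Ring A] [Algebra ℂ A] [StarRing A] [StarModule ℂ A]
    (B : Finset A) (deg : A →ₐ[ℂ] ℂ) (lam : A → A → A → ℝ)
    extends IsCAlgebra A B deg lam : Prop where
  lam_nonneg : ∀ a ∈ B, ∀ b ∈ B, ∀ c ∈ B, 0 ≤ lam a b c

/-- The standard feasible trace: `ζ(1) = |B⁺|` and `ζ(b) = 0` for `1 ≠ b ∈ B`. -/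
def IsStdTrace {A : Type*} [Ring A] [Algebra ℂ A] (B : Finset A) (deg : A →ₐ[ℂ] ℂ)
    (ζ : A →ₗ[ℂ] ℂ) : Prop :=
  ζ 1 = (∑ b ∈ B, deg b) ∧ ∀ b ∈ B, b ≠ 1 → ζ b = 0

/-- `χ` is an irreducible character of `A`: the trace of a surjective (hence irreducible)
matrix representation of positive degree. -/
def IsIrrChar (A : Type*) [Ring A] [Algebra ℂ A] (χ : A → ℂ) : Prop :=
  ∃ (n : ℕ) (D : A →ₐ[ℂ] Matrix (Fin n) (Fin n) ℂ),
    0 < n ∧ Function.Surjective ⇑D ∧ ∀ a : A, χ a = (D a).trace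

/-- `φ` agrees on the corner algebra `H = eAe = {x | e*x*e = x}` with an irreducible
character of `H`: there is an irreducible (i.e. surjective) unital matrix representation
of `H` of positive degree whose trace is `φ` on `H`. -/
def IsIrrCharOn {A : Type*} [Ring A] [Algebra ℂ A] (e : A) (φ : A → ℂ) : Prop :=
  ∃ (n : ℕ) (D : A → Matrix (Fin n) (Fin n) ℂ),
    0 < n ∧ D e = 1 ∧
    (∀ x y : A, e * x * e = x → e * y * e = y → D (x + y) = D x + D y) ∧
    (∀ (c : ℂ) (x : A), e * x * e = x → D (c • x) = c • D x) ∧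
    (∀ x y : A, e * x * e = x → e * y * e = y → D (x * y) = D x * D y) ∧
    (∀ M : Matrix (Fin n) (Fin n) ℂ, ∃ x : A, e * x * e = x ∧ D x = M) ∧
    (∀ x : A, e * x * e = x → φ x = (D x).trace)

/-- `C` is a closed subset of the basis `B` : `C` is nonempty and every basis element
occurring with nonzero coefficient in `c* ⬝ d` (for `c, d ∈ C`) lies in `C`.
Here `coord b x` is the coefficient of the basis element `b` in `x`. -/
def IsClosedSubset {A : Type*} [Ring A] [Algebra ℂ A] [StarRing A] [StarModule ℂ A]
    (B C : Finset A) (coord : A → A → ℂ) : Prop :=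
  C.Nonempty ∧ C ⊆ B ∧ ∀ c ∈ C, ∀ d ∈ C, ∀ b ∈ B, coord b (star c * d) ≠ 0 → b ∈ C

open scoped Classical in
/-- The double coset `CbC` : basis elements occurring with nonzero coefficient
in `C⁺ * b * C⁺`. -/
noncomputable def DCoset {A : Type*} [Ring A] [Algebra ℂ A]
    (B : Finset A) (coord : A → A → ℂ) (C : Finset A) (b : A) : Finset A :=
  B.filter fun y => coord y ((∑ c ∈ C, c) * b * (∑ c ∈ C, c)) ≠ 0

/-- The quotient basis element `b/C = |C⁺|⁻¹ (CbC)⁺`. -/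
noncomputable def quo {A : Type*} [Ring A] [Algebra ℂ A]
    (B : Finset A) (deg : A →ₐ[ℂ] ℂ) (coord : A → A → ℂ) (C : Finset A) (b : A) : A :=
  (∑ c ∈ C, deg c)⁻¹ • ∑ x ∈ DCoset B coord C b, x

private lemma csum_real {ι : Type*} {s : Finset ι} {f : ι → ℂ}
    (h : ∀ x ∈ s, ∃ r : ℝ, 0 ≤ r ∧ f x = (r : ℂ)) :
    ∃ r : ℝ, 0 ≤ r ∧ ∑ x ∈ s, f x = (r : ℂ) := by
  classical
  choose! g hg using h
  exact ⟨∑ x ∈ s, g x, Finset.sum_nonneg fun x hx => (hg x hx).1,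
    by push_cast; exact Finset.sum_congr rfl fun x hx => (hg x hx).2⟩

private lemma csum_zero {ι : Type*} {s : Finset ι} {f : ι → ℂ}
    (h : ∀ x ∈ s, ∃ r : ℝ, 0 ≤ r ∧ f x = (r : ℂ)) (hs : ∑ x ∈ s, f x = 0) :
    ∀ x ∈ s, f x = 0 := by
  classical
  choose! g hg using h
  have hsum : ∑ x ∈ s, g x = 0 := by
    have : ((∑ x ∈ s, g x : ℝ) : ℂ) = 0 := by
      push_cast
      rw [← hs]
      exact (Finset.sum_congr rfl fun x hx => ((hg x hx).2).symm)
    exact_mod_cast this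
  intro x hx
  have hz := (Finset.sum_eq_zero_iff_of_nonneg fun x hx => (hg x hx).1).mp hsum x hx
  rw [(hg x hx).2, hz, Complex.ofReal_zero]


/-- if `D` affords the standard character `ζ`, `D(b*) = D(b)ᵀ` and every
`D(b)` is a `(0,1)`-matrix, then each `D(b)` has exactly `|b|` ones in every row and
column, the `D(b)` are pairwise disjoint, `∑_b D(b) = J`, and the span of `{D(b)}` is a
cellular algebra (contains `I` and `J`, and is closed under multiplication, Hadamard
product and transpose). -/
theorem stmt16 {A : Type*} [Ring A] [Algebra ℂ A] [StarRing A] [StarModule ℂ A]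
    (B : Finset A) (deg : A →ₐ[ℂ] ℂ) (lam : A → A → A → ℝ)
    (hTA : IsTableAlgebra A B deg lam)
    (ζ : A →ₗ[ℂ] ℂ) (hζ : IsStdTrace B deg ζ)
    (n : ℕ) (D : A →ₐ[ℂ] Matrix (Fin n) (Fin n) ℂ)
    (hD : ∀ x : A, (D x).trace = ζ x)
    (hstar : ∀ b ∈ B, D (star b) = (D b)ᵀ)
    (h01 : ∀ b ∈ B, ∀ i j, D b i j = 0 ∨ D b i j = 1)
    (S : Submodule ℂ (Matrix (Fin n) (Fin n) ℂ))
    (hS : S = Submodule.span ℂ (⇑D '' (B : Set A))) :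
    -- each `D b` has exactly `|b| = deg b` ones in every row and in every column
    (∀ b ∈ B, (∀ i, ∑ j, D b i j = deg b) ∧ (∀ j, ∑ i, D b i j = deg b)) ∧
    -- the matrices `D b`, `b ∈ B`, are pairwise disjoint
    (∀ b ∈ B, ∀ c ∈ B, b ≠ c → ∀ i j, ¬(D b i j = 1 ∧ D c i j = 1)) ∧
    -- their sum is the all-ones matrix `J`
    (∑ b ∈ B, D b) = Matrix.of (fun _ _ => (1 : ℂ)) ∧
    -- the span of `{D b : b ∈ B}` is a cellular algebra
    (1 : Matrix (Fin n) (Fin n) ℂ) ∈ S ∧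
    Matrix.of (fun _ _ => (1 : ℂ)) ∈ S ∧
    (∀ x ∈ S, ∀ y ∈ S, x * y ∈ S) ∧
    (∀ x ∈ S, ∀ y ∈ S, Matrix.hadamard x y ∈ S) ∧
    (∀ x ∈ S, xᵀ ∈ S) := by
  classical
  obtain ⟨⟨indep, span_top, one_mem, star_mem, struct, lam_one_eq, lam_one_ne, deg_pos,
    deg_star⟩, lam_nonneg⟩ := hTA
  obtain ⟨hζ1, hζ0⟩ := hζ
  -- n = ζ 1
  have hn : ((n : ℕ) : ℂ) = ζ 1 := by
    have h := hD 1
    rw [_root_.map_one] at h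
    simpa [Matrix.trace_one] using h
  -- key trace identity
  have key : ∀ b ∈ B, ∀ c ∈ B,
      ∑ i, ∑ j, D b i j * D c i j = (lam b (star c) 1 : ℂ) * ζ 1 := by
    intro b hb c hc
    have h1 : ∑ i, ∑ j, D b i j * D c i j = (D b * D (star c)).trace := by
      rw [hstar c hc]
      simp [Matrix.trace, Matrix.mul_apply, Matrix.diag]
    rw [h1, ← _root_.map_mul, hD, struct b hb (star c) (star_mem c hc), _root_.map_sum,
      Finset.sum_eq_single_of_mem 1 one_mem (fun d hd hd1 => by
        rw [_root_.map_smul, hζ0 d hd hd1, smul_zero]),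
      _root_.map_smul, smul_eq_mul]
  have hdeg : ∀ b ∈ B, deg b = ((lam b (star b) 1 : ℝ) : ℂ) :=
    fun b hb => (lam_one_eq b hb).symm
  have hsq : ∀ b ∈ B, ∀ i j, D b i j * D b i j = D b i j := by
    intro b hb i j; rcases h01 b hb i j with h | h <;> rw [h] <;> ring
  have hcount : ∀ b ∈ B, ∑ i, ∑ j, D b i j = deg b * ζ 1 := by
    intro b hb
    have hk := key b hb b hb
    rw [lam_one_eq b hb] at hk
    calc ∑ i, ∑ j, D b i j = ∑ i, ∑ j, D b i j * D b i j :=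
          Finset.sum_congr rfl fun i _ => Finset.sum_congr rfl fun j _ => (hsq b hb i j).symm
      _ = deg b * ζ 1 := hk
  -- pairwise disjointness (entrywise products vanish)
  have hdisj0 : ∀ b ∈ B, ∀ c ∈ B, b ≠ c → ∀ i j, D b i j * D c i j = 0 := by
    intro b hb c hc hbc i j
    have hz : ∑ i : Fin n, ∑ j : Fin n, D b i j * D c i j = 0 := by
      rw [key b hb c hc, lam_one_ne b hb (star c) (star_mem c hc)
        (by rw [star_star]; exact hbc)]
      simp
    have hform : ∀ (i' j' : Fin n), ∃ r : ℝ, 0 ≤ r ∧ D b i' j' * D c i' j' = (r : ℂ) := by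
      intro i' j'
      rcases h01 b hb i' j' with h1 | h1
      · exact ⟨0, le_refl 0, by rw [h1, zero_mul, Complex.ofReal_zero]⟩
      · rcases h01 c hc i' j' with h2 | h2
        · exact ⟨0, le_refl 0, by rw [h2, mul_zero, Complex.ofReal_zero]⟩
        · exact ⟨1, zero_le_one, by rw [h1, h2, one_mul, Complex.ofReal_one]⟩
    have houter := csum_zero (fun i' _ => csum_real (fun j' _ => hform i' j')) hz i
      (Finset.mem_univ i)
    exact csum_zero (fun j' _ => hform i j') houter j (Finset.mem_univ j)
  -- row sums
  have hrow : ∀ b ∈ B, ∀ i, ∑ j, D b i j = deg b := by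
    intro b hb
    have hbb : D (b * star b) = ∑ c ∈ B, (lam b (star b) c : ℂ) • D c := by
      rw [struct b hb (star b) (star_mem b hb), _root_.map_sum]
      exact Finset.sum_congr rfl fun c _ => by rw [_root_.map_smul]
    have hdiag : ∀ i, ∑ j, D b i j = ∑ c ∈ B, (lam b (star b) c : ℂ) * D c i i := by
      intro i
      have h1 : (D (b * star b)) i i = ∑ j, D b i j := by
        rw [_root_.map_mul, hstar b hb]
        simp only [Matrix.mul_apply, Matrix.transpose_apply]
        exact Finset.sum_congr rfl fun j _ => hsq b hb i j
      rw [← h1, hbb]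
      simp [Matrix.sum_apply]
    have hsplit : ∀ i, ∑ c ∈ B, (lam b (star b) c : ℂ) * D c i i
        = deg b + ∑ c ∈ B.erase 1, (lam b (star b) c : ℂ) * D c i i := by
      intro i
      rw [← Finset.add_sum_erase _ _ one_mem]
      congr 1
      rw [_root_.map_one, Matrix.one_apply_eq, mul_one, lam_one_eq b hb]
    have hform : ∀ (i' : Fin n), ∀ c ∈ B.erase 1,
        ∃ r : ℝ, 0 ≤ r ∧ (lam b (star b) c : ℂ) * D c i' i' = (r : ℂ) := by
      intro i' c hc
      have hcB := Finset.mem_of_mem_erase hc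
      have hl := lam_nonneg b hb (star b) (star_mem b hb) c hcB
      rcases h01 c hcB i' i' with h1 | h1
      · exact ⟨0, le_refl 0, by rw [h1, mul_zero, Complex.ofReal_zero]⟩
      · exact ⟨lam b (star b) c, hl, by rw [h1, mul_one]⟩
    have hts : ∑ i : Fin n, ∑ c ∈ B.erase 1, (lam b (star b) c : ℂ) * D c i i = 0 := by
      have h2 : ∑ i : Fin n, (deg b + ∑ c ∈ B.erase 1, (lam b (star b) c : ℂ) * D c i i)
          = deg b * ζ 1 := by
        rw [← hcount b hb]
        exact Finset.sum_congr rfl fun i _ => ((hdiag i).trans (hsplit i)).symm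
      rw [Finset.sum_add_distrib, Finset.sum_const, Finset.card_univ, Fintype.card_fin,
        nsmul_eq_mul] at h2
      linear_combination h2 - deg b * hn
    intro i
    have hti : ∑ c ∈ B.erase 1, (lam b (star b) c : ℂ) * D c i i = 0 := by
      have := csum_zero (fun i' _ => csum_real (fun c hc => hform i' c hc)) hts i
        (Finset.mem_univ i)
      exact this
    rw [hdiag i, hsplit i, hti, add_zero]
  -- column sums
  have hcol : ∀ b ∈ B, ∀ j, ∑ i, D b i j = deg b := by
    intro b hb j
    have h1 := hrow (star b) (star_mem b hb) j
    rw [hstar b hb] at h1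
    simp only [Matrix.transpose_apply] at h1
    have h2 : deg (star b) = deg b := by
      rw [deg_star, hdeg b hb, Complex.conj_ofReal]
    rw [← h2]; exact h1
  -- disjointness, final form
  have hdisj : ∀ b ∈ B, ∀ c ∈ B, b ≠ c → ∀ i j, ¬(D b i j = 1 ∧ D c i j = 1) := by
    rintro b hb c hc hbc i j ⟨h1, h2⟩
    have h := hdisj0 b hb c hc hbc i j
    rw [h1, h2, mul_one] at h
    exact one_ne_zero h
  -- entries of the sum are 0 or 1
  have hTij01 : ∀ i j : Fin n, (∑ b ∈ B, D b i j) = 0 ∨ (∑ b ∈ B, D b i j) = 1 := by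
    intro i j
    by_cases hex : ∃ b ∈ B, D b i j = 1
    · obtain ⟨b0, hb0, hb01⟩ := hex
      right
      rw [Finset.sum_eq_single_of_mem b0 hb0 (fun c hc hcb => by
        rcases h01 c hc i j with h | h
        · exact h
        · exact absurd ⟨h, hb01⟩ (hdisj c hc b0 hb0 hcb i j))]
      exact hb01
    · left
      refine Finset.sum_eq_zero fun b hb => ?_
      rcases h01 b hb i j with h | h
      · exact h
      · exact absurd ⟨b, hb, h⟩ hex
  -- sum is the all-ones matrix
  have hJ : (∑ b ∈ B, D b) = Matrix.of (fun _ _ => (1 : ℂ)) := by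
    have h1 : ∑ i : Fin n, ∑ j : Fin n, ∑ b ∈ B, D b i j = ζ 1 * ζ 1 := by
      calc ∑ i : Fin n, ∑ j : Fin n, ∑ b ∈ B, D b i j
          = ∑ i : Fin n, ∑ b ∈ B, ∑ j : Fin n, D b i j :=
            Finset.sum_congr rfl fun i _ => Finset.sum_comm
        _ = ∑ b ∈ B, ∑ i : Fin n, ∑ j : Fin n, D b i j := Finset.sum_comm
        _ = ∑ b ∈ B, deg b * ζ 1 := Finset.sum_congr rfl fun b hb => hcount b hb
        _ = ζ 1 * ζ 1 := by rw [← Finset.sum_mul, ← hζ1]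
    have h2 : ∑ i : Fin n, ∑ j : Fin n, (1 : ℂ) = ζ 1 * ζ 1 := by
      rw [← hn]
      simp [Finset.sum_const, Finset.card_univ, mul_comm]
    have htot : ∑ i : Fin n, ∑ j : Fin n, ((1 : ℂ) - ∑ b ∈ B, D b i j) = 0 := by
      have hsub : ∑ i : Fin n, ∑ j : Fin n, ((1 : ℂ) - ∑ b ∈ B, D b i j)
          = (∑ i : Fin n, ∑ j : Fin n, (1 : ℂ)) - ∑ i : Fin n, ∑ j : Fin n, ∑ b ∈ B, D b i j := by
        rw [← Finset.sum_sub_distrib]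
        exact Finset.sum_congr rfl fun i _ => by rw [← Finset.sum_sub_distrib]
      rw [hsub, h1, h2, sub_self]
    have hform : ∀ (i j : Fin n), ∃ r : ℝ, 0 ≤ r ∧ (1 : ℂ) - ∑ b ∈ B, D b i j = (r : ℂ) := by
      intro i j
      rcases hTij01 i j with h | h
      · exact ⟨1, zero_le_one, by rw [h, sub_zero, Complex.ofReal_one]⟩
      · exact ⟨0, le_refl 0, by rw [h, sub_self, Complex.ofReal_zero]⟩
    ext i j
    have houter := csum_zero (fun i' _ => csum_real (fun j' _ => hform i' j')) htot i
      (Finset.mem_univ i)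
    have h0 := csum_zero (fun j' _ => hform i j') houter j (Finset.mem_univ j)
    have hA : (∑ b ∈ B, D b) i j = ∑ b ∈ B, D b i j := by simp [Matrix.sum_apply]
    rw [hA, Matrix.of_apply]
    linear_combination -h0
  -- generators lie in S
  have hgen : ∀ b ∈ B, D b ∈ S := by
    intro b hb
    rw [hS]
    exact Submodule.subset_span ⟨b, hb, rfl⟩
  have h1S : (1 : Matrix (Fin n) (Fin n) ℂ) ∈ S := by
    rw [← _root_.map_one D]
    exact hgen 1 one_mem
  have hJS : Matrix.of (fun _ _ => (1 : ℂ)) ∈ S := by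
    rw [← hJ]
    exact Submodule.sum_mem _ fun b hb => hgen b hb
  -- closed under multiplication
  have hmulgen : ∀ b ∈ B, ∀ c ∈ B, D b * D c ∈ S := by
    intro b hb c hc
    rw [← _root_.map_mul, struct b hb c hc, _root_.map_sum]
    refine Submodule.sum_mem _ fun d hd => ?_
    rw [_root_.map_smul]
    exact Submodule.smul_mem _ _ (hgen d hd)
  have hmul : ∀ x ∈ S, ∀ y ∈ S, x * y ∈ S := by
    intro x hx
    rw [hS] at hx
    refine Submodule.span_induction (p := fun x _ => ∀ y ∈ S, x * y ∈ S) ?_ ?_ ?_ ?_ hx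
    · rintro x ⟨b, hb, rfl⟩ y hy
      rw [hS] at hy
      refine Submodule.span_induction (p := fun y _ => D b * y ∈ S) ?_ ?_ ?_ ?_ hy
      · rintro y ⟨c, hc, rfl⟩
        exact hmulgen b hb c hc
      · show D b * 0 ∈ S
        rw [mul_zero]; exact Submodule.zero_mem S
      · intro u v _ _ hu hv
        rw [mul_add]; exact Submodule.add_mem S hu hv
      · intro a u _ hu
        rw [mul_smul_comm]; exact Submodule.smul_mem S a hu
    · intro y _
      rw [zero_mul]; exact Submodule.zero_mem S
    · intro u v _ _ hu hv y hy
      rw [add_mul]; exact Submodule.add_mem S (hu y hy) (hv y hy)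
    · intro a u _ hu y hy
      rw [smul_mul_assoc]; exact Submodule.smul_mem S a (hu y hy)
  -- closed under Hadamard product
  have hhadgen : ∀ b ∈ B, ∀ c ∈ B, Matrix.hadamard (D b) (D c) ∈ S := by
    intro b hb c hc
    by_cases hbc : b = c
    · subst hbc
      have heq : Matrix.hadamard (D b) (D b) = D b := by
        ext i j
        rw [Matrix.hadamard_apply]
        exact hsq b hb i j
      rw [heq]; exact hgen b hb
    · have heq : Matrix.hadamard (D b) (D c) = 0 := by
        ext i j
        rw [Matrix.hadamard_apply, Matrix.zero_apply]
        exact hdisj0 b hb c hc hbc i j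
      rw [heq]; exact Submodule.zero_mem S
  have hhad : ∀ x ∈ S, ∀ y ∈ S, Matrix.hadamard x y ∈ S := by
    intro x hx
    rw [hS] at hx
    refine Submodule.span_induction (p := fun x _ => ∀ y ∈ S, Matrix.hadamard x y ∈ S)
      ?_ ?_ ?_ ?_ hx
    · rintro x ⟨b, hb, rfl⟩ y hy
      rw [hS] at hy
      refine Submodule.span_induction (p := fun y _ => Matrix.hadamard (D b) y ∈ S) ?_ ?_ ?_ ?_ hy
      · rintro y ⟨c, hc, rfl⟩
        exact hhadgen b hb c hc
      · show Matrix.hadamard (D b) 0 ∈ S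
        rw [Matrix.hadamard_zero]; exact Submodule.zero_mem S
      · intro u v _ _ hu hv
        rw [Matrix.hadamard_add]; exact Submodule.add_mem S hu hv
      · intro a u _ hu
        rw [Matrix.hadamard_smul]; exact Submodule.smul_mem S a hu
    · intro y _
      rw [Matrix.zero_hadamard]; exact Submodule.zero_mem S
    · intro u v _ _ hu hv y hy
      rw [Matrix.add_hadamard]; exact Submodule.add_mem S (hu y hy) (hv y hy)
    · intro a u _ hu y hy
      rw [Matrix.smul_hadamard]; exact Submodule.smul_mem S a (hu y hy)
  -- closed under transpose
  have htr : ∀ x ∈ S, xᵀ ∈ S := by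
    intro x hx
    rw [hS] at hx
    refine Submodule.span_induction (p := fun x _ => xᵀ ∈ S) ?_ ?_ ?_ ?_ hx
    · rintro x ⟨b, hb, rfl⟩
      rw [← hstar b hb]
      exact hgen (star b) (star_mem b hb)
    · show (0 : Matrix (Fin n) (Fin n) ℂ)ᵀ ∈ S
      rw [Matrix.transpose_zero]; exact Submodule.zero_mem S
    · intro u v _ _ hu hv
      rw [Matrix.transpose_add]; exact Submodule.add_mem S hu hv
    · intro a u _ hu
      rw [Matrix.transpose_smul]; exact Submodule.smul_mem S a hu
  exact ⟨fun b hb => ⟨hrow b hb, hcol b hb⟩, hdisj, hJ, h1S, hJS, hmul, hhad, htr⟩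
end

section
/- Let (A,B) be a table algebra and let T : A → Mat_X(ℂ) be a unital ℂ-algebra homomorphism (T(1_A) = I) such that: each T(b), b ∈ B, is a nonzero (0,1)-matrix; T(b*) = T(b)ᵀ for every b ∈ B; for distinct b, c ∈ B the matrices T(b) and T(c) never have an entry 1 in the same position; and Σ_{b∈B} T(b) = J, the all-ones matrix. Then |X| = |B⁺| and tr(T(x)) = ζ(x) for all x ∈ A; in particular (A,B) satisfies the standard character condition. -/
open Matrix
open scoped BigOperators

/-- if `T : A → Mat_X(ℂ)` is a unital representation by pairwise-disjoint
nonzero `(0,1)`-matrices with `T(b*) = T(b)ᵀ` and `∑_b T(b) = J`, then `|X| = |B⁺|` and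
`tr ∘ T = ζ`; in particular `(A,B)` satisfies the standard character condition. -/
theorem stmt17 {A : Type*} [Ring A] [Algebra ℂ A] [StarRing A] [StarModule ℂ A]
    (B : Finset A) (deg : A →ₐ[ℂ] ℂ) (lam : A → A → A → ℝ)
    (hTA : IsTableAlgebra A B deg lam)
    (ζ : A →ₗ[ℂ] ℂ) (hζ : IsStdTrace B deg ζ)
    (X : Type*) [Fintype X] [DecidableEq X]
    (T : A →ₐ[ℂ] Matrix X X ℂ)
    (hne : ∀ b ∈ B, T b ≠ 0)
    (h01 : ∀ b ∈ B, ∀ i j, T b i j = 0 ∨ T b i j = 1)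
    (hstar : ∀ b ∈ B, T (star b) = (T b)ᵀ)
    (hdisj : ∀ b ∈ B, ∀ c ∈ B, b ≠ c → ∀ i j, ¬(T b i j = 1 ∧ T c i j = 1))
    (hsum : (∑ b ∈ B, T b) = Matrix.of (fun _ _ => (1 : ℂ))) :
    (Fintype.card X : ℂ) = (∑ b ∈ B, deg b) ∧
    (∀ x : A, (T x).trace = ζ x) ∧
    -- in particular, the standard character condition holds
    (∃ (k : ℕ) (D : A →ₐ[ℂ] Matrix (Fin k) (Fin k) ℂ), ∀ x : A, (D x).trace = ζ x) := by
  classical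
  obtain ⟨hζ1, hζ0⟩ := hζ
  have h1B := hTA.one_mem
  have hT1 : T 1 = 1 := map_one T
  have hdiag : ∀ c ∈ B, c ≠ 1 → ∀ i, T c i i = 0 := by
    intro c hc hc1 i
    rcases h01 c hc i i with h | h
    · exact h
    · exact absurd ⟨h, by simp [hT1]⟩ (hdisj c hc 1 h1B hc1 i i)
  have hrow : ∀ b ∈ B, ∀ i, ∑ k, T b i k = deg b := by
    intro b hb i
    have key : T b * (T b)ᵀ = ∑ c ∈ B, (lam b (star b) c : ℂ) • T c := by
      rw [← hstar b hb, ← _root_.map_mul, hTA.struct b hb (star b) (hTA.star_mem b hb)]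
      rw [map_sum]
      exact Finset.sum_congr rfl fun c _ => map_smul T _ _
    have e1 : (T b * (T b)ᵀ) i i = ∑ k, T b i k := by
      rw [Matrix.mul_apply]
      refine Finset.sum_congr rfl fun k _ => ?_
      rcases h01 b hb i k with h | h <;> simp [Matrix.transpose_apply, h]
    have e2 : (∑ c ∈ B, (lam b (star b) c : ℂ) • T c) i i = deg b := by
      have : (∑ c ∈ B, (lam b (star b) c : ℂ) • T c) i i
          = ∑ c ∈ B, (lam b (star b) c : ℂ) * T c i i := by
        simp [Matrix.sum_apply]
      rw [this, Finset.sum_eq_single 1]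
      · simp [hT1, hTA.lam_one_eq b hb]
      · intro c hc hc1; simp [hdiag c hc hc1 i]
      · intro h; exact absurd h1B h
    rw [← e1, key, e2]
  have hXne : Nonempty X := by
    by_contra h
    haveI : IsEmpty X := not_nonempty_iff.mp h
    exact hne 1 h1B (Subsingleton.elim _ _)
  obtain ⟨i0⟩ := hXne
  have hcard : (Fintype.card X : ℂ) = ∑ b ∈ B, deg b := by
    have h2 : ∑ b ∈ B, ∑ k, T b i0 k = ∑ b ∈ B, deg b :=
      Finset.sum_congr rfl fun b hb => hrow b hb i0
    rw [← h2, Finset.sum_comm]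
    have h3 : ∀ k : X, ∑ b ∈ B, T b i0 k = 1 := by
      intro k
      have := congrFun (congrFun hsum i0) k
      simpa [Matrix.sum_apply] using this
    simp [h3, Finset.card_univ]
  have htr : ∀ b ∈ B, (T b).trace = ζ b := by
    intro b hb
    by_cases hb1 : b = 1
    · subst hb1
      rw [hT1, hζ1, Matrix.trace_one]
      simpa using hcard
    · rw [hζ0 b hb hb1, Matrix.trace]
      simp [Matrix.diag, hdiag b hb hb1]
  have hall : ∀ x, (T x).trace = ζ x := by
    have heq : (Matrix.traceLinearMap X ℂ ℂ).comp T.toLinearMap = ζ := by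
      apply LinearMap.ext_on hTA.span_top
      intro b hb
      exact htr b (Finset.mem_coe.mp hb)
    intro x
    exact LinearMap.congr_fun heq x
  refine ⟨hcard, hall, Fintype.card X, ?_⟩
  let e := Fintype.equivFin X
  refine ⟨((Matrix.reindexAlgEquiv ℂ ℂ e).toAlgHom.comp T), fun x => ?_⟩
  show ((Matrix.reindexAlgEquiv ℂ ℂ e) (T x)).trace = ζ x
  rw [Matrix.reindexAlgEquiv_apply, Matrix.reindex_apply, ← hall x,
    Matrix.trace, Matrix.trace]
  exact Fintype.sum_equiv e.symm _ _ fun j => rfl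
end

section
/- A commutative table algebra (A,B) comes from an association scheme — i.e., there exists an injective unital ℂ-algebra homomorphism D : A → Mat_X(ℂ) such that each D(b), b ∈ B, is a (0,1)-matrix, D(b*) = D(b)ᵀ, distinct D(b), D(c) never have an entry 1 in the same position, and Σ_{b∈B} D(b) = J — if and only if (A,B) satisfies the standard character condition and some representation D affording ζ satisfies D(b*) = D(b)ᵀ and D(b) is a (0,1)-matrix for every b ∈ B. -/
open Matrix
open scoped BigOperators

section Aux
variable {A : Type*} [Ring A] [Algebra ℂ A] [StarRing A] [StarModule ℂ A]
  {B : Finset A} {deg : A →ₐ[ℂ] ℂ} {lam : A → A → A → ℝ}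
  (h : IsCAlgebra A B deg lam)
include h

lemma deg_real {b : A} (hb : b ∈ B) : deg b = ((lam b (star b) 1 : ℝ) : ℂ) :=
  (h.lam_one_eq b hb).symm

lemma deg_ne {b : A} (hb : b ∈ B) : deg b ≠ 0 := by
  rw [deg_real h hb]
  exact_mod_cast (h.deg_pos b hb).ne'

lemma deg_star_eq {b : A} (hb : b ∈ B) : deg (star b) = deg b := by
  rw [h.deg_star, deg_real h hb]
  exact Complex.conj_ofReal _

lemma sum_deg_ne : (∑ b ∈ B, deg b) ≠ 0 := by
  have : (∑ b ∈ B, deg b) = ((∑ b ∈ B, lam b (star b) 1 : ℝ) : ℂ) := by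
    push_cast
    exact Finset.sum_congr rfl fun b hb => deg_real h hb
  rw [this]
  have hpos : (0:ℝ) < ∑ b ∈ B, lam b (star b) 1 :=
    Finset.sum_pos (fun b hb => h.deg_pos b hb) ⟨1, h.one_mem⟩
  exact_mod_cast hpos.ne'

/-- reindexing a sum over B by star -/
lemma sum_star {M : Type*} [AddCommMonoid M] (g : A → M) : ∑ c ∈ B, g (star c) = ∑ c ∈ B, g c := by
  apply Finset.sum_nbij' (fun c => star c) (fun c => star c)
  · exact fun a ha => h.star_mem a ha
  · exact fun a ha => h.star_mem a ha
  · intro a _; exact star_star a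
  · intro a _; exact star_star a
  · intro a _; rfl

end Aux
section Zeta
variable {A : Type*} [Ring A] [Algebra ℂ A] [StarRing A] [StarModule ℂ A]
  {B : Finset A} {deg : A →ₐ[ℂ] ℂ} {lam : A → A → A → ℝ}
  (h : IsCAlgebra A B deg lam)
  {ζ : A →ₗ[ℂ] ℂ} (hζ : IsStdTrace B deg ζ)
include h hζ

lemma zeta_mul {a e : A} (ha : a ∈ B) (he : e ∈ B) :
    ζ (a * e) = (lam a e 1 : ℂ) * ζ 1 := by
  rw [h.struct a ha e he, map_sum, Finset.sum_eq_single 1]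
  · rw [_root_.map_smul, smul_eq_mul]
  · intro c hc hne; rw [_root_.map_smul, hζ.2 c hc hne, smul_zero]
  · intro h1; exact absurd h.one_mem h1

lemma zeta_one_ne : ζ 1 ≠ 0 := by rw [hζ.1]; exact sum_deg_ne h

lemma key_identity {a b c : A} (ha : a ∈ B) (hb : b ∈ B) (hc : c ∈ B) :
    (lam b c (star a) : ℂ) * deg a = (lam a b (star c) : ℂ) * deg c := by
  have e1 : ζ (a * (b * c)) = (lam b c (star a) : ℂ) * deg a * ζ 1 := by
    rw [h.struct b hb c hc, Finset.mul_sum]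
    simp_rw [mul_smul_comm]
    rw [map_sum]
    rw [Finset.sum_eq_single (star a)]
    · rw [_root_.map_smul, zeta_mul h hζ ha (h.star_mem a ha), smul_eq_mul,
        h.lam_one_eq a ha]
      
      ring
    · intro e he hne
      rw [_root_.map_smul, zeta_mul h hζ ha he]
      have : a ≠ star e := by
        intro hh; apply hne; rw [hh, star_star]
      rw [h.lam_one_ne a ha e he this]
      simp
    · intro hh; exact absurd (h.star_mem a ha) hh
  have e2 : ζ (a * b * c) = (lam a b (star c) : ℂ) * deg c * ζ 1 := by
    rw [h.struct a ha b hb, Finset.sum_mul]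
    simp_rw [smul_mul_assoc]
    rw [map_sum]
    rw [Finset.sum_eq_single (star c)]
    · rw [_root_.map_smul, zeta_mul h hζ (h.star_mem c hc) hc, smul_eq_mul]
      have : (lam (star c) c 1 : ℂ) = deg c := by
        have := h.lam_one_eq (star c) (h.star_mem c hc)
        rw [star_star] at this
        rw [this, deg_star_eq h hc]
      rw [this]; ring
    · intro e he hne
      rw [_root_.map_smul, zeta_mul h hζ he hc]
      have : e ≠ star c := hne
      rw [h.lam_one_ne e he c hc this]
      simp
    · intro hh; exact absurd (h.star_mem c hc) hh
  rw [← mul_assoc] at e1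
  have := e1.symm.trans e2
  exact mul_right_cancel₀ (zeta_one_ne h hζ) this

lemma sum_lam {b d : A} (hb : b ∈ B) (hd : d ∈ B) :
    ∑ c ∈ B, (lam b c d : ℂ) = deg b := by
  have hsd : star d ∈ B := h.star_mem d hd
  have step : ∀ c ∈ B, (lam b c d : ℂ) * deg d = (lam (star d) b (star c) : ℂ) * deg c := by
    intro c hc
    have := key_identity h hζ hsd hb hc
    rwa [star_star, deg_star_eq h hd] at this
  have hsum : (∑ c ∈ B, (lam b c d : ℂ)) * deg d
      = ∑ c ∈ B, (lam (star d) b (star c) : ℂ) * deg c := by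
    rw [Finset.sum_mul]
    exact Finset.sum_congr rfl step
  have hre : ∑ c ∈ B, (lam (star d) b (star c) : ℂ) * deg c
      = ∑ c ∈ B, (lam (star d) b c : ℂ) * deg c := by
    have h1 := sum_star h (fun c => (lam (star d) b c : ℂ) * deg (star c))
    simp only [star_star] at h1
    rw [h1]
    exact Finset.sum_congr rfl fun c hc => by rw [deg_star_eq h hc]
  have hdeg : ∑ c ∈ B, (lam (star d) b c : ℂ) * deg c = deg d * deg b := by
    have := congrArg deg (h.struct (star d) hsd b hb)
    rw [_root_.map_mul, map_sum] at this
    simp only [_root_.map_smul, smul_eq_mul] at this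
    rw [← this, deg_star_eq h hd]
  rw [hre, hdeg] at hsum
  have := mul_right_cancel₀ (deg_ne h hd) (hsum.trans (mul_comm _ _))
  exact this

lemma key_mul {b : A} (hb : b ∈ B) :
    b * (∑ c ∈ B, c) = deg b • ∑ c ∈ B, c := by
  rw [Finset.mul_sum]
  calc ∑ c ∈ B, b * c = ∑ c ∈ B, ∑ d ∈ B, (lam b c d : ℂ) • d :=
        Finset.sum_congr rfl fun c hc => h.struct b hb c hc
    _ = ∑ d ∈ B, ∑ c ∈ B, (lam b c d : ℂ) • d := Finset.sum_comm
    _ = ∑ d ∈ B, (∑ c ∈ B, (lam b c d : ℂ)) • d :=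
        Finset.sum_congr rfl fun d _ => (Finset.sum_smul).symm
    _ = ∑ d ∈ B, deg b • d :=
        Finset.sum_congr rfl fun d hd => by rw [sum_lam h hζ hb hd]
    _ = deg b • ∑ d ∈ B, d := (Finset.smul_sum).symm

lemma key_sq :
    (∑ b ∈ B, b) * (∑ b ∈ B, b) = (∑ b ∈ B, deg b) • ∑ b ∈ B, b := by
  rw [Finset.sum_mul, Finset.sum_smul]
  exact Finset.sum_congr rfl fun b hb => key_mul h hζ hb

end Zeta

section Cnn

/-- `x` is a nonnegative real, viewed in `ℂ`. -/
def Cnn (x : ℂ) : Prop := ∃ r : ℝ, 0 ≤ r ∧ x = (r : ℂ)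

lemma Cnn.of01 {x : ℂ} (hx : x = 0 ∨ x = 1) : Cnn x := by
  rcases hx with h | h
  · exact ⟨0, le_refl _, by simp [h]⟩
  · exact ⟨1, zero_le_one, by simp [h]⟩

lemma Cnn.mul {x y : ℂ} (hx : Cnn x) (hy : Cnn y) : Cnn (x * y) := by
  obtain ⟨r, hr, rfl⟩ := hx; obtain ⟨s, hs, rfl⟩ := hy
  exact ⟨r * s, mul_nonneg hr hs, by push_cast; ring⟩

lemma Cnn.sum {ι : Type*} {s : Finset ι} {f : ι → ℂ} (hf : ∀ i ∈ s, Cnn (f i)) :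
    Cnn (∑ i ∈ s, f i) := by
  classical
  induction s using Finset.induction_on with
  | empty => exact ⟨0, le_refl _, by simp⟩
  | @insert a s' hnot ih =>
    obtain ⟨r, hr, hfr⟩ := hf a (Finset.mem_insert_self a s')
    obtain ⟨t, ht, hft⟩ := ih (fun i hi => hf i (Finset.mem_insert_of_mem hi))
    exact ⟨r + t, add_nonneg hr ht, by rw [Finset.sum_insert hnot, hfr, hft]; push_cast; ring⟩

lemma sum_Cnn_zero {ι : Type*} {s : Finset ι} {f : ι → ℂ}
    (hf : ∀ i ∈ s, Cnn (f i)) (hsum : ∑ i ∈ s, f i = 0) : ∀ i ∈ s, f i = 0 := by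
  classical
  choose r hr hfr using hf
  have hcast : ∑ i ∈ s, f i = ((∑ i ∈ s.attach, r i.1 i.2 : ℝ) : ℂ) := by
    rw [← Finset.sum_attach s f]
    push_cast
    exact Finset.sum_congr rfl fun i _ => hfr i.1 i.2
  rw [hcast] at hsum
  have hreal : ∑ i ∈ s.attach, r i.1 i.2 = 0 := by exact_mod_cast hsum
  have hall := (Finset.sum_eq_zero_iff_of_nonneg (fun i _ => hr i.1 i.2)).mp hreal
  intro i hi
  rw [hfr i hi, hall ⟨i, hi⟩ (Finset.mem_attach _ _)]
  simp

end Cnn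

section Backward
variable {A : Type*} [Ring A] [Algebra ℂ A] [StarRing A] [StarModule ℂ A]
  {B : Finset A} {deg : A →ₐ[ℂ] ℂ} {lam : A → A → A → ℝ}
  (h : IsCAlgebra A B deg lam)
  {ζ : A →ₗ[ℂ] ℂ} (hζ : IsStdTrace B deg ζ)
include h hζ

lemma backward_aux {n : ℕ} (D : A →ₐ[ℂ] Matrix (Fin n) (Fin n) ℂ)
    (hDtr : ∀ x : A, (D x).trace = ζ x)
    (hstar : ∀ b ∈ B, D (star b) = (D b)ᵀ)
    (h01 : ∀ b ∈ B, ∀ i j, D b i j = 0 ∨ D b i j = 1) :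
    Function.Injective ⇑D ∧
    (∀ b ∈ B, ∀ c ∈ B, b ≠ c → ∀ i j, ¬(D b i j = 1 ∧ D c i j = 1)) ∧
    (∑ b ∈ B, D b) = Matrix.of (fun _ _ => (1 : ℂ)) := by
  classical
  set Bp : A := ∑ b ∈ B, b with hBp
  set E : Matrix (Fin n) (Fin n) ℂ := D Bp with hEdefn
  have hsd : (∑ b ∈ B, deg b) ≠ 0 := sum_deg_ne h
  -- the size of the matrix is ∑ deg b
  have hcard : ((n : ℕ) : ℂ) = ∑ b ∈ B, deg b := by
    have h1 := hDtr 1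
    rw [_root_.map_one, Matrix.trace_one, hζ.1] at h1
    simpa using h1
  have hn : ((n : ℕ) : ℂ) ≠ 0 := by rw [hcard]; exact hsd
  -- entries of E
  have hEdef : ∀ i j, E i j = ∑ b ∈ B, D b i j := by
    intro i j
    rw [hEdefn, hBp, map_sum, Matrix.sum_apply]
  -- E is symmetric
  have hsym : ∀ i j, E i j = E j i := by
    have hT : Eᵀ = E := by
      rw [hEdefn, hBp, map_sum, Matrix.transpose_sum]
      have : ∀ b ∈ B, (D b)ᵀ = D (star b) := fun b hb => (hstar b hb).symm
      rw [Finset.sum_congr rfl this]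
      exact sum_star h (fun b => D b) -- wrong: need ∑ D (star b) = ∑ D b
    intro i j
    conv_lhs => rw [← hT]
    rfl
  -- E * E = n • E
  have hEsq : E * E = ((n : ℕ) : ℂ) • E := by
    rw [hEdefn, ← _root_.map_mul, key_sq h hζ, _root_.map_smul, hcard]
  -- trace of E
  have htrE : E.trace = ((n : ℕ) : ℂ) := by
    rw [hEdefn, hDtr, hBp, map_sum, Finset.sum_eq_single_of_mem 1 h.one_mem
      (fun b hb hb1 => hζ.2 b hb hb1), hζ.1, hcard]
  -- sum of entries of each D b
  have hcount : ∀ b ∈ B, ∑ i, ∑ j, D b i j = deg b * ((n : ℕ) : ℂ) := by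
    intro b hb
    have hT : (D b * D (star b)).trace = deg b * ((n : ℕ) : ℂ) := by
      rw [← _root_.map_mul, hDtr, zeta_mul h hζ hb (h.star_mem b hb),
        h.lam_one_eq b hb, hζ.1, hcard]
    rw [Matrix.trace, ] at hT
    simp only [Matrix.diag_apply, Matrix.mul_apply, hstar b hb, Matrix.transpose_apply] at hT
    rw [← hT]
    apply Finset.sum_congr rfl
    intro i _
    apply Finset.sum_congr rfl
    intro j _
    rcases h01 b hb i j with h0 | h1
    · rw [h0, mul_zero]
    · rw [h1, mul_one]
  -- total number of ones
  have hsumE : ∑ i, ∑ j, E i j = ((n : ℕ) : ℂ) * ((n : ℕ) : ℂ) := by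
    have : ∑ i, ∑ j, E i j = ∑ b ∈ B, ∑ i, ∑ j, D b i j := by
      simp_rw [hEdef]
      calc ∑ i, ∑ j, ∑ b ∈ B, D b i j
          = ∑ i, ∑ b ∈ B, ∑ j, D b i j := Finset.sum_congr rfl fun i _ => Finset.sum_comm
        _ = ∑ b ∈ B, ∑ i, ∑ j, D b i j := Finset.sum_comm
    rw [this, Finset.sum_congr rfl hcount, ← Finset.sum_mul, ← hcard]
  -- sum of squares of entries of E
  have hsqE : ∑ i, ∑ j, E i j * E i j = ((n : ℕ) : ℂ) * ((n : ℕ) : ℂ) := by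
    have h1 : (E * E).trace = ((n : ℕ) : ℂ) * ((n : ℕ) : ℂ) := by
      rw [hEsq, Matrix.trace_smul, htrE, smul_eq_mul]
    rw [Matrix.trace] at h1
    simp only [Matrix.diag_apply, Matrix.mul_apply] at h1
    rw [← h1]
    apply Finset.sum_congr rfl
    intro i _
    apply Finset.sum_congr rfl
    intro j _
    rw [hsym i j]
  -- pointwise expansion of squares
  have hpoint : ∀ i j, E i j * E i j
      = E i j + ∑ b ∈ B, ∑ c ∈ B.erase b, D b i j * D c i j := by
    intro i j
    rw [hEdef i j, Finset.sum_mul_sum]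
    rw [← Finset.sum_add_distrib]
    apply Finset.sum_congr rfl
    intro b hb
    rw [← Finset.add_sum_erase _ (fun c => D b i j * D c i j) hb]
    congr 1
    rcases h01 b hb i j with h0 | h1
    · rw [h0, mul_zero]
    · rw [h1, mul_one]
  -- total cross term is zero
  have htot : ∑ i, ∑ j, ∑ b ∈ B, ∑ c ∈ B.erase b, D b i j * D c i j = 0 := by
    have : ∑ i, ∑ j, (E i j + ∑ b ∈ B, ∑ c ∈ B.erase b, D b i j * D c i j)
        = ((n : ℕ) : ℂ) * ((n : ℕ) : ℂ) := by
      rw [← Finset.sum_congr rfl fun i _ => Finset.sum_congr rfl fun j _ => hpoint i j]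
      exact hsqE
    simp_rw [Finset.sum_add_distrib] at this
    rw [hsumE] at this
    linear_combination this
  -- disjointness of supports
  have hcross : ∀ b ∈ B, ∀ c ∈ B, b ≠ c → ∀ i j, D b i j * D c i j = 0 := by
    have cnn : ∀ (i j : Fin n), ∀ b ∈ B, ∀ c ∈ B.erase b, Cnn (D b i j * D c i j) := by
      intro i j b hb c hc
      exact (Cnn.of01 (h01 b hb i j)).mul (Cnn.of01 (h01 c (Finset.mem_of_mem_erase hc) i j))
    intro b hb c hc hbc i j
    have s1 := sum_Cnn_zero (f := fun i => ∑ j, ∑ b ∈ B, ∑ c ∈ B.erase b, D b i j * D c i j)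
      (fun i _ => Cnn.sum fun j _ => Cnn.sum fun b hb => Cnn.sum fun c hc => cnn i j b hb c hc)
      htot i (Finset.mem_univ i)
    have s2 := sum_Cnn_zero (f := fun j => ∑ b ∈ B, ∑ c ∈ B.erase b, D b i j * D c i j)
      (fun j _ => Cnn.sum fun b hb => Cnn.sum fun c hc => cnn i j b hb c hc)
      s1 j (Finset.mem_univ j)
    have s3 := sum_Cnn_zero (f := fun b => ∑ c ∈ B.erase b, D b i j * D c i j)
      (fun b hb => Cnn.sum fun c hc => cnn i j b hb c hc) s2 b hb
    exact sum_Cnn_zero (f := fun c => D b i j * D c i j)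
      (fun c hc => cnn i j b hb c hc) s3 c (Finset.mem_erase.mpr ⟨hbc.symm, hc⟩)
  -- E has idempotent entries
  have hEidem : ∀ i j, E i j * E i j = E i j := by
    intro i j
    rw [hpoint i j, Finset.sum_eq_zero, add_zero]
    intro b hb
    exact Finset.sum_eq_zero fun c hc =>
      hcross b hb c (Finset.mem_of_mem_erase hc) (fun e => (Finset.notMem_erase b B) (e ▸ hc)) i j
  have hE01 : ∀ i j, E i j = 0 ∨ E i j = 1 := by
    intro i j
    have : E i j * (E i j - 1) = 0 := by linear_combination hEidem i j
    rcases mul_eq_zero.mp this with h0 | h1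
    · exact Or.inl h0
    · exact Or.inr (by linear_combination h1)
  -- diagonal entries of E are 1
  have hdiagE : ∀ i, E i i = 1 := by
    intro i
    rw [hEdef]
    rw [Finset.sum_eq_single_of_mem 1 h.one_mem]
    · rw [_root_.map_one]; exact Matrix.one_apply_eq i
    · intro c hc hne
      have hd := hcross c hc 1 h.one_mem hne i i
      rw [_root_.map_one, Matrix.one_apply_eq, mul_one] at hd
      exact hd
  -- all entries of E are 1
  have hrow : ∀ i j, E i j = 1 := by
    intro i j
    have hEEii : ∑ k, E i k * E k i = ((n : ℕ) : ℂ) := by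
      have := congrFun (congrFun hEsq i) i
      rw [Matrix.mul_apply] at this
      rw [this, Matrix.smul_apply, hdiagE i, smul_eq_mul, mul_one]
    have hsumrow : ∑ k, E i k = ((n : ℕ) : ℂ) := by
      rw [← hEEii]
      apply Finset.sum_congr rfl
      intro k _
      rw [← hsym i k, hEidem i k]
    have hzero : ∑ k : Fin n, (1 - E i k) = 0 := by
      rw [Finset.sum_sub_distrib, hsumrow, Finset.sum_const, Finset.card_univ,
        Fintype.card_fin, nsmul_eq_mul, mul_one, sub_self]
    have h01' : ∀ k, (1 : ℂ) - E i k = 0 ∨ (1 : ℂ) - E i k = 1 := by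
      intro k
      rcases hE01 i k with h0 | h1
      · exact Or.inr (by rw [h0, sub_zero])
      · exact Or.inl (by rw [h1, sub_self])
    have := sum_Cnn_zero (f := fun k => 1 - E i k)
      (fun k _ => Cnn.of01 (h01' k)) hzero j (Finset.mem_univ j)
    linear_combination -this
  refine ⟨?_, ?_, ?_⟩
  · -- injectivity
    have hDbne : ∀ b ∈ B, ∃ i j, D b i j = 1 := by
      intro b hb
      by_contra hcon
      push_neg at hcon
      have hz : ∀ i j, D b i j = 0 := by
        intro i j
        rcases h01 b hb i j with h0 | h1
        · exact h0
        · exact absurd h1 (hcon i j)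
      have := hcount b hb
      rw [Finset.sum_eq_zero (fun i _ => Finset.sum_eq_zero fun j _ => hz i j)] at this
      exact (mul_ne_zero (deg_ne h hb) hn) this.symm
    have hker : ∀ z : A, D z = 0 → z = 0 := by
      intro z hz
      have hzspan : z ∈ Submodule.span ℂ (B : Set A) := by rw [h.span_top]; trivial
      obtain ⟨f, -, hf⟩ := Submodule.mem_span_finset.mp hzspan
      have hball : ∀ b ∈ B, f b = 0 := by
        intro b hb
        obtain ⟨i, j, hij⟩ := hDbne b hb
        have h0 : (D z) i j = 0 := by rw [hz]; rfl
        rw [← hf, map_sum] at h0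
        simp only [_root_.map_smul, Matrix.sum_apply, Matrix.smul_apply, smul_eq_mul] at h0
        rw [Finset.sum_eq_single_of_mem b hb] at h0
        · rw [hij, mul_one] at h0; exact h0
        · intro c hc hne
          have hd := hcross b hb c hc hne.symm i j
          rw [hij, one_mul] at hd
          rw [hd, mul_zero]
      rw [← hf]
      exact Finset.sum_eq_zero fun b hb => by rw [hball b hb, zero_smul]
    intro x y hxy
    have := hker (x - y) (by rw [map_sub, hxy, sub_self])
    exact sub_eq_zero.mp this
  · -- disjointness
    intro b hb c hc hbc i j hcon
    have := hcross b hb c hc hbc i j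
    rw [hcon.1, hcon.2, mul_one] at this
    exact one_ne_zero this
  · -- sum is J
    ext i j
    rw [Matrix.sum_apply, ← hEdef i j, hrow i j, Matrix.of_apply]

end Backward

section Forward
variable {A : Type*} [Ring A] [Algebra ℂ A] [StarRing A] [StarModule ℂ A]
  {B : Finset A} {deg : A →ₐ[ℂ] ℂ} {lam : A → A → A → ℝ}
  (h : IsCAlgebra A B deg lam)
  {ζ : A →ₗ[ℂ] ℂ} (hζ : IsStdTrace B deg ζ)
include h hζ

lemma forward_aux {n : ℕ} (D : A →ₐ[ℂ] Matrix (Fin n) (Fin n) ℂ)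
    (hinj : Function.Injective ⇑D)
    (h01 : ∀ b ∈ B, ∀ i j, D b i j = 0 ∨ D b i j = 1)
    (hstar : ∀ b ∈ B, D (star b) = (D b)ᵀ)
    (hdisj : ∀ b ∈ B, ∀ c ∈ B, b ≠ c → ∀ i j, ¬(D b i j = 1 ∧ D c i j = 1))
    (hsum : (∑ b ∈ B, D b) = Matrix.of (fun _ _ => (1 : ℂ))) :
    ∀ x : A, (D x).trace = ζ x := by
  classical
  -- off-identity basis elements have zero diagonal
  have hdiag : ∀ b ∈ B, b ≠ 1 → ∀ i, D b i i = 0 := by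
    intro b hb hb1 i
    rcases h01 b hb i i with h0 | h1
    · exact h0
    · exact absurd ⟨h1, by rw [_root_.map_one]; exact Matrix.one_apply_eq i⟩
        (hdisj b hb 1 h.one_mem hb1 i i)
  -- row sums of D b equal deg b
  have hrow : ∀ b ∈ B, ∀ i, ∑ j, D b i j = deg b := by
    intro b hb i
    have hmul : D b * D (star b) = ∑ d ∈ B, (lam b (star b) d : ℂ) • D d := by
      rw [← _root_.map_mul, h.struct b hb (star b) (h.star_mem b hb), map_sum]
      exact Finset.sum_congr rfl fun d _ => by rw [_root_.map_smul]
    have hii := congrFun (congrFun hmul i) i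
    rw [Matrix.mul_apply] at hii
    have hL : ∑ j, D b i j * D (star b) j i = ∑ j, D b i j := by
      apply Finset.sum_congr rfl
      intro j _
      rw [hstar b hb, Matrix.transpose_apply]
      rcases h01 b hb i j with h0 | h1
      · rw [h0, mul_zero]
      · rw [h1, mul_one]
    have hR : (∑ d ∈ B, (lam b (star b) d : ℂ) • D d) i i = deg b := by
      rw [Matrix.sum_apply]
      rw [Finset.sum_eq_single_of_mem 1 h.one_mem]
      · rw [Matrix.smul_apply, _root_.map_one, Matrix.one_apply_eq, smul_eq_mul, mul_one]
        exact h.lam_one_eq b hb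
      · intro d hd hd1
        rw [Matrix.smul_apply, hdiag d hd hd1 i, smul_zero]
    rw [hL] at hii
    rw [hii, ← hR]
  -- the matrix size is ∑ deg b
  have hcard : ((n : ℕ) : ℂ) = ∑ b ∈ B, deg b := by
    rcases Nat.eq_zero_or_pos n with h0 | hpos
    · exfalso
      subst h0
      have : (1 : A) = 0 := hinj (Subsingleton.elim _ _)
      have h2 : (1 : ℂ) = 0 := by rw [← _root_.map_one deg, this, map_zero]
      exact one_ne_zero h2
    · have i : Fin n := ⟨0, hpos⟩
      have hJ : ∑ j, (∑ b ∈ B, D b) i j = ((n : ℕ) : ℂ) := by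
        rw [hsum]
        simp
      rw [← hJ]
      simp_rw [Matrix.sum_apply]
      rw [Finset.sum_comm]
      exact Finset.sum_congr rfl fun b hb => hrow b hb i
  -- conclude by linearity
  intro x
  have hx : x ∈ Submodule.span ℂ (B : Set A) := by rw [h.span_top]; trivial
  refine Submodule.span_induction (p := fun x _ => (D x).trace = ζ x) ?_ ?_ ?_ ?_ hx
  · intro b hb
    by_cases hb1 : b = (1 : A)
    · subst hb1
      rw [_root_.map_one, Matrix.trace_one, hζ.1]
      simpa using hcard
    · have : (D b).trace = 0 := by
        rw [Matrix.trace]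
        exact Finset.sum_eq_zero fun i _ => hdiag b hb hb1 i
      rw [this, hζ.2 b hb hb1]
  · simp
  · intro a b _ _ ha hb
    rw [map_add, Matrix.trace_add, map_add, ha, hb]
  · intro c a _ ha
    rw [_root_.map_smul, Matrix.trace_smul, _root_.map_smul, ha]

end Forward


/-- a commutative table algebra comes from an association scheme (i.e. has
a faithful unital representation by pairwise-disjoint `(0,1)`-matrices, closed under
transpose via `star`, summing to the all-ones matrix `J`) iff it satisfies the standard
character condition and some representation affording `ζ` sends `star` to transpose and
takes `(0,1)`-matrix values on `B`. -/
theorem stmt18 {A : Type*} [Ring A] [Algebra ℂ A] [StarRing A] [StarModule ℂ A]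
    (B : Finset A) (deg : A →ₐ[ℂ] ℂ) (lam : A → A → A → ℝ)
    (hTA : IsTableAlgebra A B deg lam)
    (hcomm : ∀ x y : A, x * y = y * x)
    (ζ : A →ₗ[ℂ] ℂ) (hζ : IsStdTrace B deg ζ) :
    (∃ (n : ℕ) (D : A →ₐ[ℂ] Matrix (Fin n) (Fin n) ℂ),
      Function.Injective ⇑D ∧
      (∀ b ∈ B, ∀ i j, D b i j = 0 ∨ D b i j = 1) ∧
      (∀ b ∈ B, D (star b) = (D b)ᵀ) ∧
      (∀ b ∈ B, ∀ c ∈ B, b ≠ c → ∀ i j, ¬(D b i j = 1 ∧ D c i j = 1)) ∧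
      (∑ b ∈ B, D b) = Matrix.of (fun _ _ => (1 : ℂ)))
    ↔
    (∃ (n : ℕ) (D : A →ₐ[ℂ] Matrix (Fin n) (Fin n) ℂ),
      (∀ x : A, (D x).trace = ζ x) ∧
      (∀ b ∈ B, D (star b) = (D b)ᵀ) ∧
      (∀ b ∈ B, ∀ i j, D b i j = 0 ∨ D b i j = 1)) := by
  constructor
  · rintro ⟨n, D, hinj, h01, hstar, hdisj, hsum⟩
    exact ⟨n, D, forward_aux hTA.toIsCAlgebra hζ D hinj h01 hstar hdisj hsum, hstar, h01⟩
  · rintro ⟨n, D, hDtr, hstar, h01⟩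
    obtain ⟨hinj, hdisj, hJ⟩ := backward_aux hTA.toIsCAlgebra hζ D hDtr hstar h01
    exact ⟨n, D, hinj, h01, hstar, hdisj, hJ⟩
end

section
/- Let (A,B) be a table algebra satisfying the standard character condition and let D : A → Mat_n(ℂ) be a representation affording ζ. Then the matrices D(b), b ∈ B, are (0,1)-matrices satisfying D(b*) = D(b)ᵀ, with no two of them having an entry 1 in the same position and with Σ_{b∈B} D(b) = J (so that the span of {D(b)} is a cellular algebra) if and only if D preserves Hadamard products, i.e., D(b) ∘ D(c) = δ_{bc} D(b) for all b, c ∈ B, where ∘ denotes the entrywise (Hadamard) product of matrices. -/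
open Matrix
open scoped BigOperators

/-- If a finite sum of complex numbers, each equal to `0` or `1`, vanishes,
then every term vanishes. -/
lemma sum01_eq_zero {ι : Type*} {s : Finset ι} {f : ι → ℂ}
    (h01 : ∀ i ∈ s, f i = 0 ∨ f i = 1) (hs : ∑ i ∈ s, f i = 0) :
    ∀ i ∈ s, f i = 0 := by
  have hre : ∑ i ∈ s, (f i).re = 0 := by
    rw [← Complex.re_sum, hs, Complex.zero_re]
  have hall := (Finset.sum_eq_zero_iff_of_nonneg (fun i hi => by
    rcases h01 i hi with h | h <;> simp [h])).mp hre
  intro i hi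
  rcases h01 i hi with h | h
  · exact h
  · exfalso
    have := hall i hi
    rw [h] at this
    simp at this

/-- for a representation `D` affording the standard character `ζ` of a
table algebra, the matrices `D(b)` are `(0,1)`, transpose-compatible with `star`,
pairwise disjoint and sum to `J` (so that the span of `{D(b)}` is a cellular algebra)
iff `D` preserves Hadamard products, i.e. `D(b) ∘ D(c) = δ_{bc} D(b)`. -/
theorem stmt19 {A : Type*} [Ring A] [Algebra ℂ A] [StarRing A] [StarModule ℂ A]
    (B : Finset A) (deg : A →ₐ[ℂ] ℂ) (lam : A → A → A → ℝ)
    (hTA : IsTableAlgebra A B deg lam)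
    (ζ : A →ₗ[ℂ] ℂ) (hζ : IsStdTrace B deg ζ)
    (n : ℕ) (D : A →ₐ[ℂ] Matrix (Fin n) (Fin n) ℂ)
    (hD : ∀ x : A, (D x).trace = ζ x) :
    ((∀ b ∈ B, ∀ i j, D b i j = 0 ∨ D b i j = 1) ∧
     (∀ b ∈ B, D (star b) = (D b)ᵀ) ∧
     (∀ b ∈ B, ∀ c ∈ B, b ≠ c → ∀ i j, ¬(D b i j = 1 ∧ D c i j = 1)) ∧
     (∑ b ∈ B, D b) = Matrix.of (fun _ _ => (1 : ℂ)))
    ↔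
    ((∀ b ∈ B, Matrix.hadamard (D b) (D b) = D b) ∧
     (∀ b ∈ B, ∀ c ∈ B, b ≠ c → Matrix.hadamard (D b) (D c) = 0)) := by
  obtain ⟨hζ1, hζ0⟩ := hζ
  set N : ℂ := ∑ b ∈ B, deg b with hN
  -- ζ on products of basis elements
  have key1 : ∀ b ∈ B, ∀ c ∈ B, ζ (b * c) = (lam b c 1 : ℂ) * N := by
    intro b hb c hc
    rw [hTA.struct b hb c hc, map_sum]
    rw [Finset.sum_eq_single_of_mem 1 hTA.one_mem]
    · rw [_root_.map_smul, hζ1, smul_eq_mul]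
    · intro d hd hd1
      rw [_root_.map_smul, hζ0 d hd hd1, smul_zero]
  have key2 : ∀ b ∈ B, ∀ c ∈ B, (D b * D c).trace = (lam b c 1 : ℂ) * N := by
    intro b hb c hc
    rw [← _root_.map_mul, hD, key1 b hb c hc]
  constructor
  · rintro ⟨h01, hstar, hdisj, hsum⟩
    constructor
    · intro b hb
      ext i j
      rcases h01 b hb i j with h | h <;> simp [Matrix.hadamard_apply, h]
    · intro b hb c hc hbc
      ext i j
      rcases h01 b hb i j with h | h
      · simp [Matrix.hadamard_apply, h]
      · rcases h01 c hc i j with h' | h'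
        · simp [Matrix.hadamard_apply, h']
        · exact absurd ⟨h, h'⟩ (hdisj b hb c hc hbc i j)
  · rintro ⟨hid, hz⟩
    -- all entries are 0 or 1
    have h01 : ∀ b ∈ B, ∀ i j, D b i j = 0 ∨ D b i j = 1 := by
      intro b hb i j
      have h := congrFun (congrFun (hid b hb) i) j
      simp only [Matrix.hadamard_apply] at h
      have h2 : D b i j * (D b i j - 1) = 0 := by
        rw [mul_sub, mul_one, h, sub_self]
      rcases mul_eq_zero.mp h2 with h' | h'
      · exact Or.inl h'
      · exact Or.inr (sub_eq_zero.mp h')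
    -- pairwise entrywise products vanish
    have hprod : ∀ b ∈ B, ∀ c ∈ B, b ≠ c → ∀ i j, D b i j * D c i j = 0 := by
      intro b hb c hc hbc i j
      have h := congrFun (congrFun (hz b hb c hc hbc) i) j
      simpa [Matrix.hadamard_apply] using h
    set E : Matrix (Fin n) (Fin n) ℂ := D (∑ b ∈ B, b) with hEdef
    have hE : ∀ i j, E i j = ∑ b ∈ B, D b i j := by
      intro i j
      rw [hEdef, map_sum, Matrix.sum_apply]
    have hE01 : ∀ i j, E i j = 0 ∨ E i j = 1 := by
      intro i j
      by_cases hex : ∃ b ∈ B, D b i j = 1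
      · obtain ⟨b, hb, hb1⟩ := hex
        right
        rw [hE i j, Finset.sum_eq_single_of_mem b hb]
        · exact hb1
        · intro c hc hcb
          have h := hprod c hc b hb hcb i j
          rw [hb1, mul_one] at h
          exact h
      · left
        rw [hE i j]
        apply Finset.sum_eq_zero
        intro b hb
        rcases h01 b hb i j with h | h
        · exact h
        · exact absurd ⟨b, hb, h⟩ hex
    have hn : (n : ℂ) = N := by
      have h1 := hD 1
      rw [_root_.map_one, Matrix.trace_one, hζ1] at h1
      simpa using h1
    -- trace of E² equals N²
    have htr : (E * E).trace = N * N := by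
      rw [hEdef, ← _root_.map_mul, hD, Finset.sum_mul_sum, map_sum]
      have hinner : ∀ b ∈ B, ∑ c ∈ B, ζ (b * c) = deg b * N := by
        intro b hb
        rw [Finset.sum_eq_single_of_mem (star b) (hTA.star_mem b hb)]
        · rw [key1 b hb (star b) (hTA.star_mem b hb), hTA.lam_one_eq b hb]
        · intro c hc hcb
          rw [key1 b hb c hc, hTA.lam_one_ne b hb c hc (by
            intro h
            apply hcb
            rw [h, star_star])]
          simp
      calc ∑ b ∈ B, ζ (∑ c ∈ B, b * c)
          = ∑ b ∈ B, ∑ c ∈ B, ζ (b * c) := by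
            apply Finset.sum_congr rfl
            intro b _
            rw [map_sum]
        _ = ∑ b ∈ B, deg b * N := Finset.sum_congr rfl hinner
        _ = N * N := by rw [← Finset.sum_mul]
    have htr2 : ∑ p ∈ (Finset.univ : Finset (Fin n × Fin n)),
        E p.1 p.2 * E p.2 p.1 = N * N := by
      rw [← htr, Matrix.trace]
      simp only [Matrix.diag, Matrix.mul_apply]
      rw [Fintype.sum_prod_type]
    -- each term E i j * E j i is 1
    have hall : ∀ i j : Fin n, E i j * E j i = 1 := by
      have hzero : ∑ p ∈ (Finset.univ : Finset (Fin n × Fin n)),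
          (1 - E p.1 p.2 * E p.2 p.1) = 0 := by
        rw [Finset.sum_sub_distrib, htr2, Finset.sum_const, Finset.card_univ,
          Fintype.card_prod, Fintype.card_fin, nsmul_eq_mul, ← hn]
        push_cast
        ring
      have h01p : ∀ p ∈ (Finset.univ : Finset (Fin n × Fin n)),
          (1 - E p.1 p.2 * E p.2 p.1) = 0 ∨ (1 - E p.1 p.2 * E p.2 p.1) = 1 := by
        intro p _
        rcases hE01 p.1 p.2 with h | h <;> rcases hE01 p.2 p.1 with h' | h' <;>
          simp [h, h']
      intro i j
      have h := sum01_eq_zero h01p hzero (i, j) (Finset.mem_univ _)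
      have h' : (1 : ℂ) - E i j * E j i = 0 := h
      exact (sub_eq_zero.mp h').symm
    -- hence E = J, i.e. the entrywise sums are 1
    have hsumJ : ∀ i j, ∑ b ∈ B, D b i j = 1 := by
      intro i j
      rw [← hE i j]
      rcases hE01 i j with h | h
      · exfalso
        have := hall i j
        rw [h, zero_mul] at this
        exact zero_ne_one this
      · exact h
    -- transpose compatibility
    have hT : ∀ b ∈ B, ∀ i j, D b i j = 1 → D (star b) j i = 1 := by
      intro b hb i j hbij
      have hoff : ∀ c ∈ B, c ≠ star b → D c j i = 0 := by
        intro c hc hcb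
        have htr0 : (D b * D c).trace = 0 := by
          rw [key2 b hb c hc, hTA.lam_one_ne b hb c hc (by
            intro h
            apply hcb
            rw [h, star_star])]
          simp
        have htr0' : ∑ p ∈ (Finset.univ : Finset (Fin n × Fin n)),
            D b p.1 p.2 * D c p.2 p.1 = 0 := by
          rw [← htr0, Matrix.trace]
          simp only [Matrix.diag, Matrix.mul_apply]
          rw [Fintype.sum_prod_type]
        have h01p : ∀ p ∈ (Finset.univ : Finset (Fin n × Fin n)),
            D b p.1 p.2 * D c p.2 p.1 = 0 ∨ D b p.1 p.2 * D c p.2 p.1 = 1 := by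
          intro p _
          rcases h01 b hb p.1 p.2 with h | h <;> rcases h01 c hc p.2 p.1 with h' | h' <;>
            simp [h, h']
        have h := sum01_eq_zero h01p htr0' (i, j) (Finset.mem_univ _)
        have h' : D b i j * D c j i = 0 := h
        rw [hbij, one_mul] at h'
        exact h'
      have hs := hsumJ j i
      rw [Finset.sum_eq_single_of_mem (star b) (hTA.star_mem b hb) hoff] at hs
      exact hs
    refine ⟨h01, ?_, ?_, ?_⟩
    · intro b hb
      ext i j
      rw [Matrix.transpose_apply]
      rcases h01 b hb j i with h | h
      · rcases h01 (star b) (hTA.star_mem b hb) i j with h' | h'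
        · rw [h, h']
        · have hc := hT (star b) (hTA.star_mem b hb) i j h'
          rw [star_star, h] at hc
          exact absurd hc.symm one_ne_zero
      · rw [h]
        exact hT b hb j i h
    · intro b hb c hc hbc i j
      rintro ⟨h1, h2⟩
      have h := hprod b hb c hc hbc i j
      rw [h1, h2, mul_one] at h
      exact one_ne_zero h
    · ext i j
      simp only [Matrix.sum_apply, Matrix.of_apply]
      exact hsumJ i j
end
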